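/- arXiv:1309.3294 — 5 statements merged into one kernel-verified Lean document; each statement's English description precedes it below -/
import Mathlib

section
/- Suppose I ⊆ ℝ is a bounded interval and g : ℝ → ℝ is Lipschitz on I. Then for almost every r ∈ ℝ (with respect to Lebesgue measure), the level set g⁻¹(r) ∩ I = {t ∈ I | g(t) = r} is finite. -/
open Set MeasureTheory Filter Topology
open scoped ENNReal NNReal

/-- For a Lipschitz function on a bounded interval, almost every level set is finite. -/
theorem lipschitz_ae_level_set_finite
    (I : Set ℝ) (hI : Bornology.IsBounded I) (hI' : I.OrdConnected)
    (g : ℝ → ℝ) (K : NNReal) (hg : LipschitzOnWith K g I) :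
    ∀ᵐ r : ℝ, {t ∈ I | g t = r}.Finite := by
  obtain ⟨f, hf, hfeq⟩ := hg.extend_real
  -- the set of non-differentiability points, and of critical points
  set N : Set ℝ := {x | ¬ DifferentiableAt ℝ f x} with hN
  set A : Set ℝ := {x | HasDerivAt f 0 x} with hA
  have hNnull : volume N = 0 := by
    have h := hf.ae_differentiableAt (μ := volume)
    rwa [MeasureTheory.ae_iff] at h
  have hNimg : volume (f '' N) = 0 := by
    rw [← MeasureTheory.hausdorffMeasure_real] at hNnull ⊢
    refine le_antisymm ?_ zero_le
    calc μH[1] (f '' N) ≤ (K : ℝ≥0∞) ^ (1 : ℝ) * μH[1] N :=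
          hf.hausdorffMeasure_image_le zero_le_one N
      _ = 0 := by rw [hNnull, mul_zero]
  have hAimg : volume (f '' A) = 0 := by
    refine addHaar_image_eq_zero_of_det_fderivWithin_eq_zero volume
      (f' := fun _ => (0 : ℝ →L[ℝ] ℝ)) (fun x hx => ?_) (fun x _ => ?_)
    · have h0 : HasFDerivAt f (0 : ℝ →L[ℝ] ℝ) x := by
        have h := hx.hasFDerivAt
        have : ContinuousLinearMap.toSpanSingleton ℝ (0 : ℝ) = 0 := by
          ext y; simp
        rwa [this] at h
      exact h0.hasFDerivWithinAt
    · simp [ContinuousLinearMap.det]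
  -- the set of bad levels is contained in f '' A ∪ f '' N
  have key : {r : ℝ | ¬ ({t ∈ I | g t = r}).Finite} ⊆ f '' A ∪ f '' N := by
    intro r hr
    rw [mem_setOf_eq, ← Set.not_infinite, not_not] at hr
    set S : Set ℝ := {t ∈ I | g t = r} with hS
    have hSsub : S ⊆ I := fun t ht => ht.1
    have hKcomp : IsCompact (closure I) :=
      Metric.isCompact_of_isClosed_isBounded isClosed_closure hI.closure
    obtain ⟨x, -, hacc⟩ := hr.exists_accPt_of_subset_isCompact hKcomp
      (hSsub.trans subset_closure)
    have hne : (𝓝[S \ {x}] x).NeBot := by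
      rw [accPt_principal_iff_clusterPt] at hacc
      exact hacc
    -- f is constantly r on S
    have hfS : ∀ t ∈ S, f t = r := fun t ht => by
      rw [← hfeq ht.1]; exact ht.2
    have hfr : Tendsto f (𝓝[S \ {x}] x) (𝓝 r) := by
      refine tendsto_const_nhds.congr' ?_
      filter_upwards [self_mem_nhdsWithin] with y hy
      exact (hfS y hy.1).symm
    have hfx : f x = r := by
      have h1 : Tendsto f (𝓝[S \ {x}] x) (𝓝 (f x)) :=
        (hf.continuous.continuousAt).tendsto.mono_left nhdsWithin_le_nhds
      exact tendsto_nhds_unique h1 hfr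
    by_cases hd : DifferentiableAt ℝ f x
    · left
      refine ⟨x, ?_, hfx⟩
      have hder : HasDerivAt f (deriv f x) x := hd.hasDerivAt
      have hslope : Tendsto (slope f x) (𝓝[≠] x) (𝓝 (deriv f x)) :=
        hasDerivAt_iff_tendsto_slope.mp hder
      have hsub : 𝓝[S \ {x}] x ≤ 𝓝[≠] x := by
        apply nhdsWithin_mono
        intro y hy
        exact hy.2
      have h1 : Tendsto (slope f x) (𝓝[S \ {x}] x) (𝓝 (deriv f x)) :=
        hslope.mono_left hsub
      have h2 : Tendsto (slope f x) (𝓝[S \ {x}] x) (𝓝 0) := by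
        refine tendsto_const_nhds.congr' ?_
        filter_upwards [self_mem_nhdsWithin] with y hy
        simp [slope, hfS y hy.1, hfx]
      have : deriv f x = 0 := tendsto_nhds_unique h1 h2
      rw [hA, mem_setOf_eq, ← this]
      exact hder
    · right
      exact ⟨x, hd, hfx⟩
  have : volume {r : ℝ | ¬ ({t ∈ I | g t = r}).Finite} = 0 :=
    measure_mono_null key (by
      refine measure_union_null hAimg hNimg)
  exact this
end

section
/- Let f : ℝ² → ℝ² be locally Lipschitz, let Ω ⊆ ℝ² be a minimal set of the ODE x' = f(x), and let x : ℝ → ℝ² be a solution whose image is contained in Ω. Then for every y₀ ∈ Ω, every δ > 0, and every s ∈ ℝ, there exists t > s such that ‖x(t) − y₀‖ < δ. -/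
open Set Metric MeasureTheory
open scoped NNReal

abbrev Plane := EuclideanSpace ℝ (Fin 2)

/-- A solution of the ODE x' = f(x): a differentiable curve satisfying deriv x t = f (x t). -/
def IsSolution (f : Plane → Plane) (x : ℝ → Plane) : Prop :=
  Differentiable ℝ x ∧ ∀ t : ℝ, deriv x t = f (x t)

/-- Ω is invariant: every point of Ω starts some solution staying in Ω, and every
solution starting in Ω remains in Ω. -/
def IsInvariantSet (f : Plane → Plane) (Ω : Set Plane) : Prop :=
  (∀ y ∈ Ω, ∃ x : ℝ → Plane, IsSolution f x ∧ x 0 = y ∧ Set.range x ⊆ Ω) ∧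
  (∀ x : ℝ → Plane, IsSolution f x → x 0 ∈ Ω → Set.range x ⊆ Ω)

/-- Ω is a minimal set: nonempty, compact, invariant, with no proper nonempty compact
invariant subset. -/
def IsMinimalSet (f : Plane → Plane) (Ω : Set Plane) : Prop :=
  Ω.Nonempty ∧ IsCompact Ω ∧ IsInvariantSet f Ω ∧
  ∀ Ω' : Set Plane, Ω'.Nonempty → IsCompact Ω' → IsInvariantSet f Ω' → Ω' ⊆ Ω → Ω' = Ω

/-- A locally Lipschitz map is Lipschitz on every compact set. -/
lemma exists_lipschitzOnWith_of_isCompact {f : Plane → Plane} (hf : LocallyLipschitz f)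
    {Ω : Set Plane} (hΩ : IsCompact Ω) : ∃ K : ℝ≥0, LipschitzOnWith K f Ω := by
  rcases Ω.eq_empty_or_nonempty with rfl | hne
  · exact ⟨1, by simp⟩
  have hfc := hf.continuous
  choose Kf tf htf hlip using hf
  have hball : ∀ y : Plane, ∃ ε > (0:ℝ), ball y ε ⊆ tf y := fun y =>
    Metric.mem_nhds_iff.1 (htf y)
  choose ε hε hsub using hball
  obtain ⟨s, hsΩ, hcov⟩ := hΩ.elim_nhds_subcover (fun y => ball y (ε y / 2))
    (fun y _ => ball_mem_nhds y (half_pos (hε y)))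
  have hsne : s.Nonempty := by
    rcases hne with ⟨z, hz⟩
    rcases mem_iUnion₂.1 (hcov hz) with ⟨i, hi, _⟩
    exact ⟨i, hi⟩
  set r : ℝ := s.inf' hsne (fun y => ε y / 2) with hr
  have hrpos : 0 < r := by
    rw [hr, Finset.lt_inf'_iff]
    intro y _; exact half_pos (hε y)
  -- bound on diameter of the image
  obtain ⟨C, hC⟩ := Metric.isBounded_iff.1 (hΩ.image hfc).isBounded
  have hC0 : 0 ≤ C := by
    rcases hne with ⟨z, hz⟩
    have := hC (mem_image_of_mem f hz) (mem_image_of_mem f hz)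
    simpa using this
  set K₀ : ℝ≥0 := s.sup Kf with hK₀
  refine ⟨Real.toNNReal (max (K₀ : ℝ) (C / r)), LipschitzOnWith.of_dist_le' ?_⟩
  intro a ha b hb
  rcases le_or_gt r (dist a b) with hd | hd
  · calc dist (f a) (f b) ≤ C := hC (mem_image_of_mem f ha) (mem_image_of_mem f hb)
    _ = (C / r) * r := by field_simp
    _ ≤ max (K₀ : ℝ) (C / r) * dist a b := by
        apply mul_le_mul (le_max_right _ _) hd hrpos.le
        exact le_trans (by positivity) (le_max_right _ _)
  · rcases mem_iUnion₂.1 (hcov ha) with ⟨i, hi, hai⟩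
    have hbi : b ∈ ball i (ε i) := by
      have h1 : dist a i < ε i / 2 := mem_ball.1 hai
      have h2 : r ≤ ε i / 2 := by
        rw [hr]; exact Finset.inf'_le _ hi
      have : dist b i ≤ dist b a + dist a i := dist_triangle _ _ _
      rw [mem_ball]
      rw [dist_comm] at hd
      linarith
    have hai' : a ∈ ball i (ε i) := by
      have h1 : dist a i < ε i / 2 := mem_ball.1 hai
      rw [mem_ball]; linarith [hε i]
    have hK : LipschitzOnWith (Kf i) f (ball i (ε i)) :=
      (hlip i).mono (hsub i)
    have := hK.dist_le_mul a hai' b hbi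
    calc dist (f a) (f b) ≤ (Kf i : ℝ) * dist a b := this
    _ ≤ max (K₀ : ℝ) (C / r) * dist a b := by
        apply mul_le_mul_of_nonneg_right _ dist_nonneg
        exact le_trans (by exact_mod_cast NNReal.coe_le_coe.2 (Finset.le_sup hi)) (le_max_left _ _)

/-- Gronwall estimate: two solutions staying in a set on which `f` is Lipschitz
diverge at most exponentially (both forwards and backwards in time). -/
lemma dist_solutions_le {f : Plane → Plane} {Ω : Set Plane} {K : ℝ≥0}
    (hK : LipschitzOnWith K f Ω) {u v : ℝ → Plane}
    (hu : IsSolution f u) (hv : IsSolution f v)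
    (huΩ : Set.range u ⊆ Ω) (hvΩ : Set.range v ⊆ Ω) (t : ℝ) :
    dist (u t) (v t) ≤ dist (u 0) (v 0) * Real.exp (K * |t|) := by
  rcases le_or_gt 0 t with ht | ht
  · have := dist_le_of_trajectories_ODE_of_mem (v := fun _ y => f y)
      (s := fun _ => Ω) (K := K) (fun _ _ => hK)
      (hu.1.continuous.continuousOn (s := Icc 0 t))
      (fun t' _ => by
        have h := (hu.1 t').hasDerivAt
        rw [hu.2 t'] at h
        exact h.hasDerivWithinAt)
      (fun t' _ => huΩ (mem_range_self t'))
      (hv.1.continuous.continuousOn (s := Icc 0 t))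
      (fun t' _ => by
        have h := (hv.1 t').hasDerivAt
        rw [hv.2 t'] at h
        exact h.hasDerivWithinAt)
      (fun t' _ => hvΩ (mem_range_self t'))
      (le_refl (dist (u 0) (v 0))) t ⟨ht, le_refl t⟩
    simpa [abs_of_nonneg ht] using this
  · -- backwards in time: reverse time
    have hKneg : LipschitzOnWith K (fun y => -(f y)) Ω := by
      intro a ha b hb
      simpa [edist_neg_neg] using hK ha hb
    have hder : ∀ (w : ℝ → Plane), IsSolution f w → ∀ t' : ℝ,
        HasDerivAt (fun s => w (-s)) (-(f (w (-t')))) t' := by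
      intro w hw t'
      have h1 : HasDerivAt w (f (w (-t'))) (-t') := by
        have h := (hw.1 (-t')).hasDerivAt
        rwa [hw.2 (-t')] at h
      have h2 : HasDerivAt (fun s : ℝ => -s) (-1) t' := (hasDerivAt_id t').neg
      have := h1.scomp t' h2
      simpa [Function.comp_def] using this
    have := dist_le_of_trajectories_ODE_of_mem (v := fun _ y => -(f y))
      (s := fun _ => Ω) (K := K) (δ := dist (u 0) (v 0)) (fun _ _ => hKneg)
      (f := fun s => u (-s)) (g := fun s => v (-s)) (a := 0) (b := -t)
      ((hu.1.continuous.comp continuous_neg).continuousOn)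
      (fun t' _ => (hder u hu t').hasDerivWithinAt)
      (fun t' _ => huΩ (mem_range_self (-t')))
      ((hv.1.continuous.comp continuous_neg).continuousOn)
      (fun t' _ => (hder v hv t').hasDerivWithinAt)
      (fun t' _ => hvΩ (mem_range_self (-t')))
      (by norm_num) (-t) ⟨by linarith, le_refl _⟩
    simpa [abs_of_neg ht] using this

lemma shift_solution {f : Plane → Plane} {x : ℝ → Plane} (hx : IsSolution f x) (q : ℝ) :
    IsSolution f (fun u => x (q + u)) := by
  constructor
  · exact hx.1.comp ((differentiable_id).const_add q)
  · intro t
    rw [deriv_comp_const_add, hx.2]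

/-- Recurrence: a solution lying in a minimal set returns arbitrarily close to every
point of the set at arbitrarily large times. -/
theorem minimal_set_recurrence (f : Plane → Plane) (hf : LocallyLipschitz f)
    (Ω : Set Plane) (hΩ : IsMinimalSet f Ω)
    (x : ℝ → Plane) (hx : IsSolution f x) (hxΩ : Set.range x ⊆ Ω) :
    ∀ y₀ ∈ Ω, ∀ δ > (0 : ℝ), ∀ s : ℝ, ∃ t > s, ‖x t - y₀‖ < δ := by
  obtain ⟨hne, hcomp, hinv, hmin⟩ := hΩ
  obtain ⟨K, hK⟩ := exists_lipschitzOnWith_of_isCompact hf hcomp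
  -- the ω-limit set of the trajectory x
  set W : Set Plane := ⋂ n : ℕ, closure (x '' Ici (n : ℝ)) with hW
  have hWclosed : IsClosed W := isClosed_iInter (fun n => isClosed_closure)
  have hWsub : W ⊆ Ω := by
    refine (iInter_subset _ 0).trans ?_
    rw [← hcomp.isClosed.closure_eq]
    exact closure_mono (by rintro _ ⟨t, _, rfl⟩; exact hxΩ (mem_range_self t))
  have hWcomp : IsCompact W := hcomp.of_isClosed_subset hWclosed hWsub
  have hWne : W.Nonempty := by
    apply IsCompact.nonempty_iInter_of_sequence_nonempty_isCompact_isClosed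
    · intro n
      exact closure_mono (image_mono (f := x) (Ici_subset_Ici.2 (by exact_mod_cast Nat.le_succ n)))
    · intro n
      exact (Nonempty.image x ⟨(n:ℝ), self_mem_Ici⟩).closure
    · exact hcomp.of_isClosed_subset isClosed_closure
        (by rw [← hcomp.isClosed.closure_eq]
            exact closure_mono (by rintro _ ⟨t, _, rfl⟩; exact hxΩ (mem_range_self t)))
    · exact fun n => isClosed_closure
  -- key: every solution in Ω starting in W stays in W
  have hkey : ∀ z : ℝ → Plane, IsSolution f z → Set.range z ⊆ Ω → z 0 ∈ W →
      Set.range z ⊆ W := by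
    intro z hz hzΩ hz0
    rintro _ ⟨t, rfl⟩
    rw [hW, mem_iInter]
    intro n
    rw [Metric.mem_closure_iff]
    intro η hη
    -- choose m large enough
    obtain ⟨m, hm⟩ := exists_nat_ge ((n : ℝ) + |t|)
    have hz0m : z 0 ∈ closure (x '' Ici (m : ℝ)) := by
      rw [hW, mem_iInter] at hz0; exact hz0 m
    have hexp : (0:ℝ) < Real.exp (K * |t|) := Real.exp_pos _
    obtain ⟨w, ⟨q, hq, rfl⟩, hqd⟩ := Metric.mem_closure_iff.1 hz0m
      (η / Real.exp (K * |t|)) (by positivity)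
    -- the shifted solution through x q
    have hshift := shift_solution hx q
    have hshiftΩ : Set.range (fun u => x (q + u)) ⊆ Ω := by
      rintro _ ⟨u, rfl⟩; exact hxΩ (mem_range_self _)
    have hdist := dist_solutions_le hK hz hshift hzΩ hshiftΩ t
    simp only [add_zero] at hdist
    refine ⟨x (q + t), ⟨q + t, ?_, rfl⟩, ?_⟩
    · -- q + t ≥ n
      have h1 : (n : ℝ) + |t| ≤ q := le_trans hm hq
      have h2 : -|t| ≤ t := neg_abs_le t
      simp only [mem_Ici]; linarith
    · calc dist (z t) (x (q + t)) ≤ dist (z 0) (x q) * Real.exp (K * |t|) := hdist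
      _ < (η / Real.exp (K * |t|)) * Real.exp (K * |t|) := by
          exact mul_lt_mul_of_pos_right hqd hexp
      _ = η := by field_simp
  -- W is invariant
  have hWinv : IsInvariantSet f W := by
    constructor
    · intro y hy
      obtain ⟨z, hz, hz0, hzΩ⟩ := hinv.1 y (hWsub hy)
      exact ⟨z, hz, hz0, hkey z hz hzΩ (hz0 ▸ hy)⟩
    · intro z hz hz0
      exact hkey z hz (hinv.2 z hz (hWsub hz0)) hz0
  -- minimality forces W = Ω
  have hWeq : W = Ω := hmin W hWne hWcomp hWinv hWsub
  -- conclude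
  intro y₀ hy₀ δ hδ s
  obtain ⟨n, hn⟩ := exists_nat_gt s
  have hy₀W : y₀ ∈ closure (x '' Ici (n : ℝ)) := by
    rw [← hWeq, hW, mem_iInter] at hy₀
    exact hy₀ n
  obtain ⟨w, ⟨t, ht, rfl⟩, hd⟩ := Metric.mem_closure_iff.1 hy₀W δ hδ
  refine ⟨t, lt_of_lt_of_le hn ht, ?_⟩
  rw [← dist_eq_norm, dist_comm]
  exact hd
end

section
/- Let f : ℝ² → ℝ² be locally Lipschitz, let Ω ⊆ ℝ² be a minimal set of the ODE x' = f(x), and let x : ℝ → ℝ² be a solution whose image is contained in Ω. If there exists t* > 0 with x(t*) = x(0), then x is periodic with period t*, i.e., x(t + t*) = x(t) for all t ∈ ℝ, and the image of x equals Ω. -/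
open Set Metric MeasureTheory

/-- Shifting a solution in time gives a solution. -/
lemma IsSolution.shift {f : Plane → Plane} {x : ℝ → Plane} (hx : IsSolution f x) (c : ℝ) :
    IsSolution f (fun t => x (t + c)) := by
  refine ⟨hx.1.comp (differentiable_id.add_const c), fun t => ?_⟩
  rw [deriv_comp_add_const, hx.2]

/-- Global uniqueness of solutions for a locally Lipschitz field. -/
lemma solution_unique {f : Plane → Plane} (hf : LocallyLipschitz f)
    {x y : ℝ → Plane} (hx : IsSolution f x) (hy : IsSolution f y)
    (h0 : x 0 = y 0) : x = y := by
  have key : {t : ℝ | x t = y t} = univ := by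
    have hclopen : IsClopen {t : ℝ | x t = y t} := by
      constructor
      · exact isClosed_eq hx.1.continuous hy.1.continuous
      · rw [isOpen_iff_mem_nhds]
        intro t ht
        obtain ⟨K, s, hs, hK⟩ := hf (x t)
        have hxd : ∀ u, HasDerivAt x (f (x u)) u := fun u => hx.2 u ▸ (hx.1 u).hasDerivAt
        have hyd : ∀ u, HasDerivAt y (f (y u)) u := fun u => hy.2 u ▸ (hy.1 u).hasDerivAt
        have hxs : ∀ᶠ u in nhds t, x u ∈ s :=
          hx.1.continuous.continuousAt.preimage_mem_nhds hs
        have hys : ∀ᶠ u in nhds t, y u ∈ s := by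
          have hs' : s ∈ nhds (y t) := by rw [← (ht : x t = y t)]; exact hs
          exact hy.1.continuous.continuousAt.preimage_mem_nhds hs'
        have := ODE_solution_unique_of_eventually
          (v := fun _ : ℝ => f) (s := fun _ : ℝ => s) (K := K)
          (Filter.Eventually.of_forall fun _ => hK)
          (hxs.mono fun u hu => ⟨hxd u, hu⟩)
          (hys.mono fun u hu => ⟨hyd u, hu⟩) ht
        exact this
    exact hclopen.eq_univ ⟨0, h0⟩
  funext t
  exact (key ▸ mem_univ t : t ∈ {t : ℝ | x t = y t})

/-- If a solution in a minimal set returns to its initial point at some time t* > 0,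
then it is periodic with period t* and its image is all of Ω. -/
theorem minimal_set_periodic (f : Plane → Plane) (hf : LocallyLipschitz f)
    (Ω : Set Plane) (hΩ : IsMinimalSet f Ω)
    (x : ℝ → Plane) (hx : IsSolution f x) (hxΩ : Set.range x ⊆ Ω)
    (tstar : ℝ) (htstar : 0 < tstar) (hper : x tstar = x 0) :
    (∀ t : ℝ, x (t + tstar) = x t) ∧ Set.range x = Ω := by
  have hshift := hx.shift tstar
  have heq : (fun t => x (t + tstar)) = x :=
    solution_unique hf hshift hx (by simpa using hper)
  have hperiodic : ∀ t : ℝ, x (t + tstar) = x t := fun t => congrFun heq t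
  refine ⟨hperiodic, ?_⟩
  have hP : Function.Periodic x tstar := hperiodic
  have hcompact : IsCompact (Set.range x) := by
    have : x '' Icc 0 (0 + tstar) = Set.range x := hP.image_Icc htstar 0
    rw [← this]
    exact (isCompact_Icc).image hx.1.continuous
  have hinv : IsInvariantSet f (Set.range x) := by
    constructor
    · rintro y ⟨s, rfl⟩
      exact ⟨fun t => x (t + s), hx.shift s, by simp, range_subset_iff.2 fun t => ⟨t + s, rfl⟩⟩
    · rintro z hz hz0
      obtain ⟨s, hs⟩ := hz0
      have : z = fun t => x (t + s) :=
        solution_unique hf hz (hx.shift s) (by simpa using hs.symm)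
      rw [this]
      exact range_subset_iff.2 fun t => ⟨t + s, rfl⟩
  exact hΩ.2.2.2 _ ⟨x 0, mem_range_self 0⟩ hcompact hinv hxΩ
end

section
/- Let f : ℝ² → ℝ² be locally Lipschitz, let Ω ⊆ ℝ² be a minimal set of the ODE x' = f(x) that is not a singleton, and let x : ℝ → ℝ² be a solution whose image is contained in Ω. Then for every y₀ ∈ Ω and every r > 0, the set of visit times {t ∈ [0, ∞) | ‖x(t) − y₀‖ < r} has infinite Lebesgue measure. -/
open Set Metric MeasureTheory Filter Topology NNReal ENNReal

/-- A locally Lipschitz map is Lipschitz on every compact set. -/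
lemma lipschitzOnWith_of_locallyLipschitz {E F : Type*} [MetricSpace E] [MetricSpace F]
    {f : E → F} (hf : LocallyLipschitz f) {K : Set E} (hK : IsCompact K) :
    ∃ C : ℝ≥0, LipschitzOnWith C f K := by
  by_contra h
  push_neg at h
  have h' : ∀ n : ℕ, ∃ a ∈ K, ∃ b ∈ K, (n : ℝ) * dist a b < dist (f a) (f b) := by
    intro n
    have hn := h n
    rw [lipschitzOnWith_iff_dist_le_mul] at hn
    push_neg at hn
    obtain ⟨a, ha, b, hb, hab⟩ := hn
    exact ⟨a, ha, b, hb, by exact_mod_cast hab⟩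
  choose a ha b hb hab using h'
  obtain ⟨p, hpK, φ, hφ, hap⟩ := hK.tendsto_subseq ha
  obtain ⟨q, hqK, ψ, hψ, hbq⟩ := hK.tendsto_subseq (fun n => hb (φ n))
  set σ : ℕ → ℕ := fun n => φ (ψ n) with hσ
  have hσn : ∀ n, n ≤ σ n := fun n => le_trans (hψ.le_apply) (hφ.le_apply)
  have hfc : Continuous f := hf.continuous
  obtain ⟨D, hD⟩ := ((hK.image hfc).isBounded).subset_closedBall (f p)
  have hDd : ∀ n, dist (f (a n)) (f (b n)) ≤ 2 * D := by
    intro n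
    have h1 : f (a n) ∈ closedBall (f p) D := hD ⟨a n, ha n, rfl⟩
    have h2 : f (b n) ∈ closedBall (f p) D := hD ⟨b n, hb n, rfl⟩
    calc dist (f (a n)) (f (b n)) ≤ dist (f (a n)) (f p) + dist (f p) (f (b n)) :=
      dist_triangle _ _ _
    _ ≤ D + D := add_le_add (mem_closedBall.mp h1) (by rw [dist_comm]; exact mem_closedBall.mp h2)
    _ = 2 * D := by ring
  -- dist (a (σ n)) (b (σ n)) → 0
  have hdist0 : Tendsto (fun n => dist (a (σ n)) (b (σ n))) atTop (𝓝 0) := by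
    apply squeeze_zero' (Filter.Eventually.of_forall (fun n => dist_nonneg))
      (g := fun n : ℕ => 2 * D / n)
    · filter_upwards [eventually_ge_atTop 1] with n hn
      have h1 : (σ n : ℝ) * dist (a (σ n)) (b (σ n)) < 2 * D :=
        lt_of_lt_of_le (hab (σ n)) (hDd (σ n))
      have hσpos : (0:ℝ) < n := by exact_mod_cast hn
      have hσn' : (n : ℝ) ≤ σ n := by exact_mod_cast hσn n
      rw [le_div_iff₀ hσpos]
      nlinarith [dist_nonneg (x := a (σ n)) (y := b (σ n))]
    · exact tendsto_const_div_atTop_nhds_zero_nat _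
  have haσ : Tendsto (fun n => a (σ n)) atTop (𝓝 p) := hap.comp hψ.tendsto_atTop
  have hbσ : Tendsto (fun n => b (σ n)) atTop (𝓝 p) := by
    have : Tendsto (fun n => b (σ n)) atTop (𝓝 p) := by
      rw [tendsto_iff_dist_tendsto_zero]
      apply squeeze_zero (fun n => dist_nonneg)
        (g := fun n => dist (a (σ n)) (b (σ n)) + dist (a (σ n)) p)
      · intro n
        calc dist (b (σ n)) p ≤ dist (b (σ n)) (a (σ n)) + dist (a (σ n)) p := dist_triangle _ _ _
        _ = dist (a (σ n)) (b (σ n)) + dist (a (σ n)) p := by rw [dist_comm]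
      · have := hdist0.add (tendsto_iff_dist_tendsto_zero.mp haσ)
        simpa using this
    exact this
  obtain ⟨C₀, t, ht, hC₀⟩ := hf p
  obtain ⟨ε, hε, hball⟩ := Metric.mem_nhds_iff.mp ht
  have h1 : ∀ᶠ n in atTop, a (σ n) ∈ ball p ε := haσ.eventually (ball_mem_nhds p hε)
  have h2 : ∀ᶠ n in atTop, b (σ n) ∈ ball p ε := hbσ.eventually (ball_mem_nhds p hε)
  obtain ⟨N, hN⟩ := exists_nat_gt (C₀ : ℝ)
  have h3 : ∀ᶠ n in atTop, (C₀ : ℝ) < σ n := by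
    filter_upwards [eventually_ge_atTop N] with n hn
    have : (N:ℝ) ≤ σ n := by exact_mod_cast le_trans hn (hσn n)
    linarith
  obtain ⟨n, hna, hnb, hnC⟩ := (h1.and (h2.and h3)).exists
  have hAB := hC₀.dist_le_mul _ (hball hna) _ (hball hnb)
  have hlt := hab (σ n)
  have hd0 : 0 ≤ dist (a (σ n)) (b (σ n)) := dist_nonneg
  nlinarith

lemma hasDerivAt_sol {f : Plane → Plane} {u : ℝ → Plane} (hu : IsSolution f u) (t : ℝ) :
    HasDerivAt u (f (u t)) t := by
  have := (hu.1 t).hasDerivAt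
  rwa [hu.2] at this

lemma isSolution_shift {f : Plane → Plane} {u : ℝ → Plane} (hu : IsSolution f u) (c : ℝ) :
    IsSolution f (fun t => u (t + c)) := by
  have h : ∀ t, HasDerivAt (fun t => u (t + c)) (f (u (t + c))) t := by
    intro t
    have h1 : HasDerivAt u (f (u (t + c))) (t + c) := hasDerivAt_sol hu (t + c)
    have h2 : HasDerivAt (fun t : ℝ => t + c) 1 t := (hasDerivAt_id t).add_const c
    have h3 := h1.scomp t h2
    simp only [one_smul] at h3
    exact h3
  exact ⟨fun t => (h t).differentiableAt, fun t => (h t).deriv⟩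

/-- Grönwall estimate for two solutions staying in a set on which `f` is Lipschitz. -/
lemma sol_dist_le {f : Plane → Plane} {Ω : Set Plane} {K₀ : ℝ≥0}
    (hK : LipschitzOnWith K₀ f Ω) {u w : ℝ → Plane} (hu : IsSolution f u) (hw : IsSolution f w)
    (hru : Set.range u ⊆ Ω) (hrw : Set.range w ⊆ Ω) (t : ℝ) :
    dist (u t) (w t) ≤ dist (u 0) (w 0) * Real.exp (K₀ * |t|) := by
  rcases le_total 0 t with h | h
  · have := dist_le_of_trajectories_ODE_of_mem (v := fun _ => f) (s := fun _ => Ω)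
      (fun _ _ => hK)
      (hu.1.continuous.continuousOn)
      (fun s _ => (hasDerivAt_sol hu s).hasDerivWithinAt)
      (fun s _ => hru (mem_range_self s))
      (hw.1.continuous.continuousOn)
      (fun s _ => (hasDerivAt_sol hw s).hasDerivWithinAt)
      (fun s _ => hrw (mem_range_self s))
      le_rfl t ⟨h, le_rfl⟩
    simpa [abs_of_nonneg h] using this
  · have hK' : LipschitzOnWith K₀ (fun z => -(f z)) Ω := by
      rw [show K₀ = 1 * K₀ from (one_mul K₀).symm]
      exact LipschitzWith.id.neg.comp_lipschitzOnWith hK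
    have hu' : ∀ s, HasDerivAt (fun s : ℝ => u (-s)) (-(f (u (-s)))) s := by
      intro s
      have h1 := hasDerivAt_sol hu (-s)
      have h2 : HasDerivAt (fun s : ℝ => -s) (-1) s := (hasDerivAt_id s).neg
      have h3 := h1.scomp s h2
      simp only [neg_smul, one_smul] at h3
      exact h3
    have hw' : ∀ s, HasDerivAt (fun s : ℝ => w (-s)) (-(f (w (-s)))) s := by
      intro s
      have h1 := hasDerivAt_sol hw (-s)
      have h2 : HasDerivAt (fun s : ℝ => -s) (-1) s := (hasDerivAt_id s).neg
      have h3 := h1.scomp s h2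
      simp only [neg_smul, one_smul] at h3
      exact h3
    have := dist_le_of_trajectories_ODE_of_mem (v := fun _ z => -(f z)) (s := fun _ => Ω)
      (fun _ _ => hK')
      ((hu.1.continuous.comp continuous_neg).continuousOn)
      (fun s _ => (hu' s).hasDerivWithinAt)
      (fun s _ => hru (mem_range_self _))
      ((hw.1.continuous.comp continuous_neg).continuousOn)
      (fun s _ => (hw' s).hasDerivWithinAt)
      (fun s _ => hrw (mem_range_self _))
      le_rfl (-t) ⟨neg_nonneg.mpr h, le_rfl⟩
    simpa [abs_of_nonpos h] using this

/-- For a nontrivial minimal set, the set of times a solution spends in any ball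
around a point of Ω has infinite Lebesgue measure. -/
theorem minimal_set_infinite_visit_time (f : Plane → Plane) (hf : LocallyLipschitz f)
    (Ω : Set Plane) (hΩ : IsMinimalSet f Ω) (hns : ¬ ∃ p : Plane, Ω = {p})
    (x : ℝ → Plane) (hx : IsSolution f x) (hxΩ : Set.range x ⊆ Ω) :
    ∀ y₀ ∈ Ω, ∀ r > (0 : ℝ),
      volume {t : ℝ | 0 ≤ t ∧ ‖x t - y₀‖ < r} = ⊤ := by
  intro y₀ hy₀ r hr
  obtain ⟨hne, hcomp, hinv, hmin⟩ := hΩ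
  obtain ⟨K₀, hK⟩ := lipschitzOnWith_of_locallyLipschitz hf hcomp
  have hΩclosed : IsClosed Ω := hcomp.isClosed
  set S := {t : ℝ | 0 ≤ t ∧ ‖x t - y₀‖ < r} with hS
  set L : Set Plane := ⋂ T : ℝ, closure (x '' Ici T) with hLdef
  have hsubΩ : ∀ T : ℝ, closure (x '' Ici T) ⊆ Ω :=
    fun T => closure_minimal ((image_subset_range x _).trans hxΩ) hΩclosed
  have hLsub : L ⊆ Ω := fun p hp => hsubΩ 0 (mem_iInter.mp hp 0)
  have memL : ∀ p, p ∈ L ↔ ∀ T : ℝ, ∀ ε > 0, ∃ s ≥ T, dist (x s) p < ε := by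
    intro p
    rw [hLdef, mem_iInter]
    constructor
    · intro h T ε hε
      obtain ⟨b, hbmem, hd⟩ := Metric.mem_closure_iff.mp (h T) ε hε
      obtain ⟨s, hs, rfl⟩ := hbmem
      exact ⟨s, hs, by rwa [dist_comm]⟩
    · intro h T
      rw [Metric.mem_closure_iff]
      intro ε hε
      obtain ⟨s, hs, hd⟩ := h T ε hε
      exact ⟨x s, ⟨s, hs, rfl⟩, by rwa [dist_comm]⟩
  have hLcomp_each : ∀ T : ℝ, IsCompact (closure (x '' Ici T)) := fun T =>
    hcomp.of_isClosed_subset isClosed_closure (hsubΩ T)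
  have hLne : L.Nonempty := by
    apply IsCompact.nonempty_iInter_of_directed_nonempty_isCompact_isClosed
    · intro s t
      exact ⟨max s t,
        closure_mono (image_mono (Ici_subset_Ici.mpr (le_max_left _ _))),
        closure_mono (image_mono (Ici_subset_Ici.mpr (le_max_right _ _)))⟩
    · exact fun T => ⟨x T, subset_closure ⟨T, Set.self_mem_Ici, rfl⟩⟩
    · exact hLcomp_each
    · exact fun _ => isClosed_closure
  have hLcompact : IsCompact L :=
    hcomp.of_isClosed_subset (isClosed_iInter fun _ => isClosed_closure) hLsub
  have hprop : ∀ z : ℝ → Plane, IsSolution f z → Set.range z ⊆ Ω → z 0 ∈ L → ∀ t, z t ∈ L := by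
    intro z hz hzΩ hz0 t
    rw [memL]
    intro T ε hε
    set E := Real.exp (K₀ * |t|) with hE
    have hEpos : 0 < E := Real.exp_pos _
    obtain ⟨s₀, hs₀, hd⟩ := (memL _).mp hz0 (T - t) (ε / E) (by positivity)
    have hshift := isSolution_shift hx s₀
    have hshiftr : Set.range (fun τ => x (τ + s₀)) ⊆ Ω := by
      rintro p ⟨τ, rfl⟩; exact hxΩ (mem_range_self _)
    have hgr := sol_dist_le hK hshift hz hshiftr hzΩ t
    refine ⟨t + s₀, by linarith, ?_⟩
    rw [zero_add] at hgr
    calc dist (x (t + s₀)) (z t) ≤ dist (x s₀) (z 0) * E := hgr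
    _ < (ε / E) * E := mul_lt_mul_of_pos_right hd hEpos
    _ = ε := by field_simp
  have hLinv : IsInvariantSet f L := by
    constructor
    · intro y hy
      obtain ⟨z, hz, hz0, hzΩ⟩ := hinv.1 y (hLsub hy)
      refine ⟨z, hz, hz0, ?_⟩
      rintro p ⟨t, rfl⟩
      exact hprop z hz hzΩ (by rwa [hz0]) t
    · intro z hz hz0
      have hzΩ : Set.range z ⊆ Ω := hinv.2 z hz (hLsub hz0)
      rintro p ⟨t, rfl⟩
      exact hprop z hz hzΩ hz0 t
  have hLΩ : L = Ω := hmin L hLne hLcompact hLinv hLsub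
  have hy₀L : ∀ T : ℝ, ∀ ε > 0, ∃ s ≥ T, dist (x s) y₀ < ε := by
    rw [← memL]
    rw [hLΩ]
    exact hy₀
  obtain ⟨C, hC⟩ := hcomp.exists_bound_of_continuousOn hf.continuous.continuousOn
  set M := max C 1 with hM
  have hM1 : (1:ℝ) ≤ M := le_max_right _ _
  have hMpos : 0 < M := lt_of_lt_of_le one_pos hM1
  have hbound : ∀ t, ‖f (x t)‖ ≤ M :=
    fun t => le_trans (hC _ (hxΩ (mem_range_self t))) (le_max_left _ _)
  set δ := r / (2 * M) with hδ
  have hδpos : 0 < δ := by positivity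
  have hMδ : M * δ = r / 2 := by
    rw [hδ]; field_simp
  have hkey : ∀ T : ℝ, ∃ t, max T 0 ≤ t ∧ Ioc t (t + δ) ⊆ S := by
    intro T
    obtain ⟨t, ht, hd⟩ := hy₀L (max T 0) (r/2) (by positivity)
    refine ⟨t, ht, ?_⟩
    intro s hs
    have ht0 : 0 ≤ t := le_trans (le_max_right _ _) ht
    have hsub : ∀ s' ∈ Icc t (t + δ), ‖x s' - x t‖ ≤ M * (s' - t) :=
      norm_image_sub_le_of_norm_deriv_le_segment'
        (fun s' _ => (hasDerivAt_sol hx s').hasDerivWithinAt)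
        (fun s' _ => hbound s')
    have h1 := hsub s ⟨le_of_lt hs.1, hs.2⟩
    have h2 : M * (s - t) ≤ M * δ := by
      apply mul_le_mul_of_nonneg_left _ (le_of_lt hMpos)
      linarith [hs.2]
    constructor
    · linarith [hs.1]
    · have htri : ‖x s - y₀‖ ≤ ‖x s - x t‖ + dist (x t) y₀ := by
        rw [show x s - y₀ = (x s - x t) + (x t - y₀) by abel]
        exact le_trans (norm_add_le _ _) (by rw [dist_eq_norm])
      calc ‖x s - y₀‖ ≤ ‖x s - x t‖ + dist (x t) y₀ := htri
      _ ≤ M * δ + dist (x t) y₀ := by linarith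
      _ < r / 2 + r / 2 := by rw [hMδ]; linarith
      _ = r := by ring
  choose g hg1 hg2 using hkey
  set seq : ℕ → ℝ := fun n => Nat.rec (g 0) (fun _ p => g (p + δ + 1)) n with hseq
  have hseqS : ∀ n, seq (n+1) = g (seq n + δ + 1) := fun n => rfl
  have hstep : ∀ n, seq n + δ + 1 ≤ seq (n+1) := by
    intro n; rw [hseqS]; exact le_trans (le_max_left _ _) (hg1 _)
  have hIoc : ∀ n, Ioc (seq n) (seq n + δ) ⊆ S := by
    intro n
    cases n with
    | zero => exact hg2 0
    | succ m => rw [hseqS]; exact hg2 _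
  have hmono : ∀ i j, i < j → seq i + δ < seq j := by
    intro i j hij
    induction j with
    | zero => omega
    | succ j ih =>
      rcases Nat.lt_succ_iff_lt_or_eq.mp hij with h | h
      · have h1 := ih h
        have h2 := hstep j
        linarith
      · subst h
        have := hstep i
        linarith
  have hvol : ∀ n : ℕ, (n : ℝ≥0∞) * ENNReal.ofReal δ ≤ volume S := by
    intro n
    have hdisjkey : ∀ i j : ℕ, i < j →
        Disjoint (Ioc (seq i) (seq i + δ)) (Ioc (seq j) (seq j + δ)) := by
      intro i j h
      apply Set.Ioc_disjoint_Ioc.mpr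
      have h1 := hmono i j h
      calc min (seq i + δ) (seq j + δ) ≤ seq i + δ := min_le_left _ _
      _ ≤ max (seq i) (seq j) := le_trans h1.le (le_max_right _ _)
    have hdisj : (↑(Finset.range n) : Set ℕ).PairwiseDisjoint
        (fun i => Ioc (seq i) (seq i + δ)) := by
      intro i _ j _ hij
      rcases lt_or_gt_of_ne hij with h | h
      · exact hdisjkey i j h
      · exact (hdisjkey j i h).symm
    calc (n : ℝ≥0∞) * ENNReal.ofReal δ
        = ∑ i ∈ Finset.range n, volume (Ioc (seq i) (seq i + δ)) := by
          simp [Real.volume_Ioc]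
      _ = volume (⋃ i ∈ Finset.range n, Ioc (seq i) (seq i + δ)) :=
          (measure_biUnion_finset hdisj (fun i _ => measurableSet_Ioc)).symm
      _ ≤ volume S := by
          apply measure_mono
          intro t ht
          simp only [mem_iUnion] at ht
          obtain ⟨i, _, hti⟩ := ht
          exact hIoc i hti
  refine ENNReal.eq_top_of_forall_nnreal_le fun c => ?_
  obtain ⟨n, hn⟩ := exists_nat_ge ((c : ℝ) / δ)
  have hc : (c:ℝ) ≤ n * δ := by
    rw [div_le_iff₀ hδpos] at hn; linarith
  calc (c : ℝ≥0∞) = ENNReal.ofReal c := ENNReal.ofReal_coe_nnreal.symm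
    _ ≤ ENNReal.ofReal (n * δ) := ENNReal.ofReal_le_ofReal hc
    _ = n * ENNReal.ofReal δ := by
        rw [ENNReal.ofReal_mul (by positivity)]; simp
    _ ≤ volume S := hvol n
end

section
/- Let K ⊆ ℝ² be a compact set, let g : ℝ → ℝ² be a measurable function, and let S ⊆ [0, ∞) be a measurable set of infinite Lebesgue measure such that g(t) ∈ K for all t ∈ S. Suppose there is a constant C ≥ 0 such that for every T > 0, ‖∫_{S ∩ [0, T]} g(t) dt‖ ≤ C. Then 0 belongs to the closed convex hull of K. -/
open Set Metric MeasureTheory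

/-- Averaging principle: if g takes values in a compact set K on a set S of infinite
measure, and the integrals of g over S ∩ [0, T] stay bounded, then 0 lies in the
closed convex hull of K. -/
theorem zero_mem_closed_convexHull_of_bounded_integral
    (K : Set (EuclideanSpace ℝ (Fin 2))) (hK : IsCompact K)
    (g : ℝ → EuclideanSpace ℝ (Fin 2)) (hg : Measurable g)
    (S : Set ℝ) (hS : MeasurableSet S) (hS0 : S ⊆ Set.Ici (0 : ℝ))
    (hSvol : volume S = ⊤) (hgK : ∀ t ∈ S, g t ∈ K)
    (C : ℝ) (hC : 0 ≤ C)
    (hbound : ∀ T > (0 : ℝ), ‖∫ t in S ∩ Set.Icc 0 T, g t‖ ≤ C) :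
    (0 : EuclideanSpace ℝ (Fin 2)) ∈ closure (convexHull ℝ K) := by
  by_contra h0
  -- separate 0 from the closed convex hull
  obtain ⟨f, u, hfu, hub⟩ := geometric_hahn_banach_point_closed
    (convex_convexHull ℝ K).closure isClosed_closure h0
  have hu : 0 < u := by simpa using hfu
  -- bound on K
  obtain ⟨M, hM⟩ := hK.isBounded.exists_norm_le
  -- choose T with big measure of S ∩ [0, T]
  set r : ℝ := (‖f‖ * C + 1) / u with hr
  have hUnion : S = ⋃ n : ℕ, S ∩ Set.Icc 0 (n : ℝ) := by
    ext x
    constructor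
    · intro hx
      obtain ⟨n, hn⟩ := exists_nat_ge x
      exact Set.mem_iUnion.2 ⟨n, hx, hS0 hx, hn⟩
    · rintro hx
      obtain ⟨n, hn, _⟩ := Set.mem_iUnion.1 hx
      exact hn
  have hdir : Directed (· ⊆ ·) (fun n : ℕ => S ∩ Set.Icc 0 (n : ℝ)) := by
    intro m n
    exact ⟨max m n, Set.inter_subset_inter_right _
        (Set.Icc_subset_Icc le_rfl (by exact_mod_cast le_max_left m n)),
      Set.inter_subset_inter_right _
        (Set.Icc_subset_Icc le_rfl (by exact_mod_cast le_max_right m n))⟩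
  have hsup : (⨆ n : ℕ, volume (S ∩ Set.Icc 0 (n : ℝ))) = ⊤ := by
    rw [← hdir.measure_iUnion, ← hUnion, hSvol]
  obtain ⟨n, hn⟩ : ∃ n : ℕ, ENNReal.ofReal r < volume (S ∩ Set.Icc 0 (n : ℝ)) := by
    by_contra h
    push_neg at h
    have := iSup_le h
    rw [hsup] at this
    exact (ENNReal.ofReal_lt_top.not_ge this).elim
  set T : ℝ := (n : ℝ) + 1 with hT
  have hT0 : (0 : ℝ) < T := by positivity
  set A := S ∩ Set.Icc 0 T with hA
  have hAmeas : MeasurableSet A := hS.inter measurableSet_Icc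
  have hAfin : volume A ≠ ⊤ := by
    refine ne_top_of_le_ne_top ?_ (measure_mono (Set.inter_subset_right))
    simp [Real.volume_Icc]
  have hnA : ENNReal.ofReal r < volume A := by
    refine hn.trans_le (measure_mono (Set.inter_subset_inter_right _ ?_))
    exact Set.Icc_subset_Icc le_rfl (by linarith)
  -- integrability
  have hint : IntegrableOn g A := by
    have : IsFiniteMeasure (volume.restrict A) :=
      ⟨by rwa [Measure.restrict_apply_univ, lt_top_iff_ne_top]⟩
    refine Integrable.mono' (integrable_const M) hg.aestronglyMeasurable ?_
    filter_upwards [ae_restrict_mem hAmeas] with t ht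
    exact hM _ (hgK t ht.1)
  -- key inequality
  have hKsub : ∀ t ∈ A, u ≤ f (g t) := fun t ht =>
    (hub _ (subset_closure (subset_convexHull ℝ K (hgK t ht.1)))).le
  have hge : u * (volume A).toReal ≤ ∫ t in A, f (g t) :=
    setIntegral_ge_of_const_le_real hAmeas hAfin hKsub
      (f.integrable_comp hint)
  have hcomm : ∫ t in A, f (g t) = f (∫ t in A, g t) :=
    f.integral_comp_comm hint
  have hle : f (∫ t in A, g t) ≤ ‖f‖ * C := by
    calc f (∫ t in A, g t) ≤ ‖f (∫ t in A, g t)‖ := le_abs_self _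
    _ ≤ ‖f‖ * ‖∫ t in A, g t‖ := f.le_opNorm _
    _ ≤ ‖f‖ * C := by
        exact mul_le_mul_of_nonneg_left (hbound T hT0) (norm_nonneg f)
  have hr0 : 0 ≤ r := by positivity
  have hrA : r < (volume A).toReal :=
    (ENNReal.ofReal_lt_iff_lt_toReal hr0 hAfin).1 hnA
  have : ‖f‖ * C + 1 ≤ ‖f‖ * C := by
    calc ‖f‖ * C + 1 = u * r := by rw [hr]; field_simp [hu.ne']
    _ ≤ u * (volume A).toReal := by nlinarith
    _ ≤ ∫ t in A, f (g t) := hge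
    _ = f (∫ t in A, g t) := hcomm
    _ ≤ ‖f‖ * C := hle
  linarith
end
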